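/- If there is a quasi-isomorphism from a two-term complex P⁻¹ →g P⁰ of projective left A-modules to the complex K_f = (A →f B), then there is a short exact sequence 0 → P⁻¹ → A ⊕ P⁰ → B → 0 of left A-modules; in particular B has projective dimension at most one as a left A-module. -/

import Mathlib

/-- A ring homomorphism is an epimorphism in the category of rings. -/
def IsRingEpi {A B : Type*} [Ring A] [Ring B] (f : A →+* B) : Prop :=
  ∀ (C : Type*) [Ring C] (g₁ g₂ : B →+* C), g₁.comp f = g₂.comp f → g₁ = g₂

/-- A morphism of two-term complexes `(P⁻¹ →g P⁰) ⟶ (M →f N)`, given by components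
`π₂` (degree `-1`) and `π₁` (degree `0`), is a quasi-isomorphism: it commutes with the
differentials and induces isomorphisms on `H⁻¹` (kernels) and `H⁰` (cokernels). -/
def IsTwoTermQuasiIso {A P Q M N : Type*} [Ring A]
    [AddCommGroup P] [AddCommGroup Q] [AddCommGroup M] [AddCommGroup N]
    [Module A P] [Module A Q] [Module A M] [Module A N]
    (g : P →ₗ[A] Q) (f : M →ₗ[A] N) (π₂ : P →ₗ[A] M) (π₁ : Q →ₗ[A] N) : Prop :=
  f.comp π₂ = π₁.comp g ∧
  Submodule.map π₂ (LinearMap.ker g) = LinearMap.ker f ∧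
  (∀ x ∈ LinearMap.ker g, π₂ x = 0 → x = 0) ∧
  (∀ n : N, ∃ q : Q, n - π₁ q ∈ LinearMap.range f) ∧
  (∀ q : Q, π₁ q ∈ LinearMap.range f → q ∈ LinearMap.range g)

/-- Let `f : A → B` be a ring epimorphism (with `B` an `A`-module via `f`).
If there is a quasi-isomorphism `(π₂, π₁)` from a two-term complex `P⁻¹ →g P⁰` of projective
left `A`-modules to `K_f = (A →f B)`, then
`0 → P⁻¹ → A ⊕ P⁰ → B → 0`, with maps `x ↦ (π₂ x, g x)` and `(y, z) ↦ f y - π₁ z`,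
is a short exact sequence of left `A`-modules; in particular (as `A ⊕ P⁰` is projective)
`B` has projective dimension at most one. -/
theorem ses_of_twoTermQuasiIso {A B Pm1 P0 : Type*} [Ring A] [Ring B] (f : A →+* B)
    [Module A B] (hsmul : ∀ (a : A) (b : B), a • b = f a * b)
    (fl : A →ₗ[A] B) (hfl : ∀ a : A, fl a = f a)
    (hepi : IsRingEpi f)
    [AddCommGroup Pm1] [AddCommGroup P0] [Module A Pm1] [Module A P0]
    [Module.Projective A Pm1] [Module.Projective A P0]
    (g : Pm1 →ₗ[A] P0) (π₂ : Pm1 →ₗ[A] A) (π₁ : P0 →ₗ[A] B)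
    (hqis : IsTwoTermQuasiIso g fl π₂ π₁) :
    Function.Injective (LinearMap.prod π₂ g) ∧
      Function.Exact (LinearMap.prod π₂ g)
        (fl.comp (LinearMap.fst A A P0) - π₁.comp (LinearMap.snd A A P0)) ∧
      Function.Surjective (fl.comp (LinearMap.fst A A P0) - π₁.comp (LinearMap.snd A A P0)) := by

  obtain ⟨hcomm, hker, hinj, hsur, hlift⟩ := hqis
  refine ⟨?_, ?_, ?_⟩
  · intro x y hxy
    simp only [LinearMap.prod_apply, Function.prod, Prod.mk.injEq] at hxy
    have h1 : π₂ (x - y) = 0 := by simp [hxy.1]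
    have h2 : g (x - y) = 0 := by simp [hxy.2]
    exact sub_eq_zero.mp (hinj (x - y) h2 h1)
  · intro ⟨y, z⟩
    constructor
    · intro h
      have : fl y = π₁ z := by
        simpa [sub_eq_zero] using h
      have hz : z ∈ LinearMap.range g := hlift z ⟨y, this.symm ▸ rfl⟩
      obtain ⟨p, hp⟩ := hz
      have h2 : fl (y - π₂ p) = 0 := by
        have hc := LinearMap.congr_fun hcomm p
        simp only [LinearMap.coe_comp, Function.comp_apply] at hc
        rw [map_sub, hc, hp, ‹fl y = π₁ z›, sub_self]
      have : y - π₂ p ∈ LinearMap.ker fl := h2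
      rw [← hker] at this
      obtain ⟨k, hk, hk2⟩ := this
      refine ⟨p + k, ?_⟩
      have hgk : g k = 0 := hk
      simp only [LinearMap.prod_apply, Function.prod, Prod.mk.injEq]
      constructor
      · rw [map_add, hk2]; abel
      · rw [map_add, hgk, hp, add_zero]
    · rintro ⟨x, hx⟩
      have hc := LinearMap.congr_fun hcomm x
      simp only [LinearMap.coe_comp, Function.comp_apply] at hc
      simp only [LinearMap.prod_apply, Function.prod, Prod.mk.injEq] at hx
      simp [← hx.1, ← hx.2, hc]
  · intro b
    obtain ⟨q, a, ha⟩ := hsur b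
    refine ⟨(a, -q), ?_⟩
    simp only [LinearMap.sub_apply, LinearMap.coe_comp, Function.comp_apply,
      LinearMap.fst_apply, LinearMap.snd_apply, map_neg, sub_neg_eq_add]
    rw [ha]; abel
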